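/- Let (εᵢ) be a sequence in (0, 1/4) with εᵢ → 0. For each i let ũᵢ : [0,2] → [0,∞) be equal to εᵢ⁻¹ on [1/2−εᵢ, 1/2] ∪ [3/2, 3/2+εᵢ] and 0 elsewhere, and let x̃ᵢ : [−1,2] → ℝ be the unique solution, absolutely continuous on [0,2], of the delay differential equation ẋ̃ᵢ(t) = x̃ᵢ(t) x̃ᵢ(t−1) ũᵢ(t) for a.e. t ∈ [0,2], with x̃ᵢ(t) = 1 for all t ∈ [−1,0]. Then for every t ∈ [0,2] \ {1/2, 3/2}, x̃ᵢ(t) → x̃(t) as i → ∞, where x̃(t) = 1 for t ∈ [0,1/2), x̃(t) = e for t ∈ [1/2, 3/2), and x̃(t) = e^{1+e} for t ∈ (3/2, 2]. -/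

import Mathlib

open Set Filter

open MeasureTheory intervalIntegral Topology

private lemma ae_ne_point (a : ℝ) : ∀ᵐ s : ℝ, s ≠ a := by
  rw [Filter.eventually_iff, MeasureTheory.mem_ae_iff]
  have h : {s : ℝ | s ≠ a}ᶜ = {a} := by ext s; simp
  rw [h]
  exact Real.volume_singleton

private lemma integrableOn_of_aeeq {f g : ℝ → ℝ} {s : Set ℝ} (hs : MeasurableSet s)
    (hg : IntegrableOn g s volume) (h : ∀ᵐ t : ℝ, t ∈ s → f t = g t) :
    IntegrableOn f s volume :=
  hg.congr (Filter.EventuallyEq.symm ((ae_restrict_iff' hs).mpr h))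

private lemma key_ode (x : ℝ → ℝ) (k c p q : ℝ) (hpq : p ≤ q)
    (H1 : ∀ t ∈ Icc p q, IntervalIntegrable (fun s => k * x s) volume p t →
      x t = c + ∫ s in p..t, k * x s)
    (H2 : ∀ t ∈ Icc p q, ¬ IntervalIntegrable (fun s => k * x s) volume p t → x t = 1) :
    ∀ t ∈ Icc p q, x t = c * Real.exp (k * (t - p)) := by
  have hy : ∀ s : ℝ, HasDerivAt (fun w => c * Real.exp (k * (w - p)))
      (k * (c * Real.exp (k * (s - p)))) s := by
    intro s
    have h1 : HasDerivAt (fun w : ℝ => k * (w - p)) k s := by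
      simpa using ((hasDerivAt_id s).sub_const p).const_mul k
    have h2 := (Real.hasDerivAt_exp (k * (s - p))).comp s h1
    have h3 := h2.const_mul c
    rw [show k * (c * Real.exp (k * (s - p))) = c * (Real.exp (k * (s - p)) * k) by ring]
    exact h3
  have hL : ∀ _s : ℝ, LipschitzWith ‖k‖₊ (fun y : ℝ => k * y) := by
    intro _
    simpa [smul_eq_mul] using lipschitzWith_smul (β := ℝ) k
  have U : ∀ r ∈ Icc p q, IntervalIntegrable (fun s => k * x s) volume p r →
      ∀ t ∈ Icc p r, x t = c * Real.exp (k * (t - p)) := by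
    intro r hr hint
    have hpr : p ≤ r := hr.1
    have hsub : ∀ t ∈ Icc p r, IntervalIntegrable (fun s => k * x s) volume p t := by
      intro t ht
      refine hint.mono_set ?_
      rw [uIcc_of_le ht.1, uIcc_of_le hpr]
      exact Icc_subset_Icc_right ht.2
    have heq : EqOn x (fun t => c + ∫ s in p..t, k * x s) (Icc p r) := fun t ht =>
      H1 t ⟨ht.1, ht.2.trans hr.2⟩ (hsub t ht)
    have hprim : ContinuousOn (fun t => c + ∫ s in p..t, k * x s) (Icc p r) := by
      have h := intervalIntegral.continuousOn_primitive_interval' hint left_mem_uIcc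
      rw [uIcc_of_le hpr] at h
      exact continuousOn_const.add h
    have hxc : ContinuousOn x (Icc p r) := hprim.congr heq
    have hfc : ContinuousOn (fun s => k * x s) (Icc p r) := continuousOn_const.mul hxc
    have hxp : x p = c := by
      have h := heq (left_mem_Icc.mpr hpr)
      simpa using h
    have hderiv : ∀ t ∈ Ico p r, HasDerivWithinAt x (k * x t) (Ici t) t := by
      intro t ht
      have hmem : Icc p r ∈ 𝓝[Ioi t] t := by
        rw [mem_nhdsWithin]
        exact ⟨Iio r, isOpen_Iio, ht.2, fun s hs => ⟨ht.1.trans hs.2.le, hs.1.le⟩⟩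
      have hmem' : Icc p r ∈ 𝓝[Ici t] t := by
        rw [mem_nhdsWithin]
        exact ⟨Iio r, isOpen_Iio, ht.2, fun s hs => ⟨ht.1.trans hs.2, hs.1.le⟩⟩
      have hd : HasDerivWithinAt (fun w => ∫ s in p..w, k * x s) (k * x t) (Ici t) t :=
        intervalIntegral.integral_hasDerivWithinAt_right (hsub t (Ico_subset_Icc_self ht))
          ⟨Icc p r, hmem, hfc.aestronglyMeasurable measurableSet_Icc⟩
          ((hfc t (Ico_subset_Icc_self ht)).mono_of_mem_nhdsWithin hmem)
      have hd2 : HasDerivWithinAt (fun w => c + ∫ s in p..w, k * x s) (k * x t) (Ici t) t :=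
        hd.const_add c
      refine hd2.congr_of_eventuallyEq ?_ (heq (Ico_subset_Icc_self ht))
      filter_upwards [hmem'] with s hs using heq hs
    have hyc : ContinuousOn (fun w => c * Real.exp (k * (w - p))) (Icc p r) := by
      fun_prop
    have := ODE_solution_unique (v := fun _ y => k * y) hL hxc hderiv hyc
      (fun t _ => (hy t).hasDerivWithinAt) (by rw [hxp]; simp)
    exact fun t ht => this ht
  -- sSup argument
  set S := {r | r ∈ Icc p q ∧ IntervalIntegrable (fun s => k * x s) volume p r} with hS
  have hpS : p ∈ S := ⟨left_mem_Icc.mpr hpq, IntervalIntegrable.refl⟩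
  have hbdd : BddAbove S := ⟨q, fun r hr => hr.1.2⟩
  set m := sSup S with hm
  have hmq : m ≤ q := csSup_le ⟨p, hpS⟩ fun r hr => hr.1.2
  have hpm : p ≤ m := le_csSup hbdd hpS
  have hval : ∀ s ∈ Ioo p m, x s = c * Real.exp (k * (s - p)) := by
    intro s hs
    obtain ⟨r, hrS, hsr⟩ := exists_lt_of_lt_csSup ⟨p, hpS⟩ hs.2
    exact U r hrS.1 hrS.2 s ⟨hs.1.le, hsr.le⟩
  have hmS : IntervalIntegrable (fun s => k * x s) volume p m := by
    rw [intervalIntegrable_iff_integrableOn_Ioc_of_le hpm]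
    refine integrableOn_of_aeeq measurableSet_Ioc
      (g := fun s => k * (c * Real.exp (k * (s - p))))
      (Continuous.integrableOn_Ioc (by fun_prop)) ?_
    filter_upwards [ae_ne_point m] with s hsm hs
    rw [hval s ⟨hs.1, lt_of_le_of_ne hs.2 hsm⟩]
  have hmqeq : m = q := by
    by_contra hne
    have hmlt : m < q := lt_of_le_of_ne hmq hne
    have hone : ∀ s ∈ Ioc m q, x s = 1 := by
      intro s hs
      refine H2 s ⟨hpm.trans hs.1.le, hs.2⟩ fun h => ?_
      exact absurd (le_csSup hbdd ⟨⟨hpm.trans hs.1.le, hs.2⟩, h⟩) (not_le.mpr hs.1)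
    have hint : IntervalIntegrable (fun s => k * x s) volume p q := by
      rw [intervalIntegrable_iff_integrableOn_Ioc_of_le hpq,
        ← Set.Ioc_union_Ioc_eq_Ioc hpm hmq]
      refine MeasureTheory.IntegrableOn.union
        ((intervalIntegrable_iff_integrableOn_Ioc_of_le hpm).mp hmS) ?_
      refine integrableOn_of_aeeq measurableSet_Ioc
        (g := fun _ => k * 1) ((integrableOn_const_iff).mpr (Or.inr measure_Ioc_lt_top)) ?_
      exact Filter.Eventually.of_forall fun s hs => by rw [hone s hs]
    have : q ≤ m := le_csSup hbdd ⟨⟨hpq, le_refl q⟩, hint⟩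
    linarith
  exact U q ⟨hpq, le_refl q⟩ (hmqeq ▸ hmS)

private lemma solution_profile (e : ℝ) (he0 : 0 < e) (he4 : e < 1/4)
    (u : ℝ → ℝ)
    (hu : ∀ t : ℝ, u t = if t ∈ Icc (1/2 - e : ℝ) (1/2) ∪ Icc (3/2 : ℝ) (3/2 + e) then e⁻¹ else 0)
    (x : ℝ → ℝ)
    (hist : ∀ t ∈ Icc (-1:ℝ) 0, x t = 1)
    (hsol : ∀ t ∈ Icc (0:ℝ) 2, x t = 1 + ∫ s in (0:ℝ)..t, x s * x (s - 1) * u s) :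
    (∀ t ∈ Icc (0:ℝ) (1/2 - e), x t = 1) ∧ (∀ t ∈ Icc (1/2:ℝ) (3/2), x t = Real.exp 1) ∧
      (∀ t ∈ Icc (3/2 + e : ℝ) 2, x t = Real.exp (1 + Real.exp 1)) := by
  have hene : e ≠ 0 := ne_of_gt he0
  set a := (1/2 : ℝ) - e with ha
  have ha0 : (0:ℝ) ≤ a := by rw [ha]; linarith
  set f := fun s => x s * x (s - 1) * u s with hf
  have hu1 : ∀ s ∈ Icc a (1/2:ℝ), u s = e⁻¹ := fun s hs => by
    rw [hu s, if_pos (Set.mem_union_left _ hs)]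
  have hu2 : ∀ s ∈ Icc (3/2:ℝ) (3/2+e), u s = e⁻¹ := fun s hs => by
    rw [hu s, if_pos (Set.mem_union_right _ hs)]
  have fz : ∀ s : ℝ, s ∉ Icc a (1/2:ℝ) → s ∉ Icc (3/2:ℝ) (3/2+e) → f s = 0 := by
    intro s h1 h2
    have hu0 : u s = 0 := by
      rw [hu s, if_neg]
      rintro (h | h)
      exacts [h1 h, h2 h]
    simp only [hf, hu0, mul_zero]
  have Z1 : ∀ t ∈ Icc (0:ℝ) a, (∫ s in (0:ℝ)..t, f s) = 0 := by
    intro t ht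
    have hae : ∀ᵐ s : ℝ, s ∈ Set.uIoc (0:ℝ) t → f s = 0 := by
      filter_upwards [ae_ne_point a] with s hsa hs
      rw [uIoc_of_le ht.1] at hs
      have hs2 : s < a := lt_of_le_of_ne (hs.2.trans ht.2) hsa
      exact fz s (fun h => by linarith [h.1]) (fun h => by
        have := h.1; rw [ha] at hs2; linarith)
    rw [intervalIntegral.integral_congr_ae hae, intervalIntegral.integral_zero]
  have I1 : IntervalIntegrable f volume 0 a := by
    rw [intervalIntegrable_iff_integrableOn_Ioc_of_le ha0]
    refine integrableOn_of_aeeq measurableSet_Ioc (g := fun _ => (0:ℝ)) (integrableOn_zero) ?_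
    filter_upwards [ae_ne_point a] with s hsa hs
    have hs2 : s < a := lt_of_le_of_ne hs.2 hsa
    exact fz s (fun h => by linarith [h.1]) (fun h => by
      have := h.1; rw [ha] at hs2; linarith)
  have P1 : ∀ t ∈ Icc (0:ℝ) a, x t = 1 := by
    intro t ht
    rw [hsol t ⟨ht.1, by rw [ha] at ht; linarith [ht.2]⟩, Z1 t ht]
    norm_num
  -- first bump
  have g1eq : ∀ s ∈ Icc a (1/2:ℝ), f s = e⁻¹ * x s := by
    intro s hs
    have h1 := hs.1; have h2 := hs.2
    rw [ha] at h1
    have hx1 : x (s-1) = 1 := hist (s-1) ⟨by linarith, by linarith⟩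
    simp only [hf]
    rw [hx1, hu1 s hs]
    ring
  have hiff1 : ∀ t ∈ Icc a (1/2:ℝ),
      (IntervalIntegrable (fun s => e⁻¹ * x s) volume a t ↔ IntervalIntegrable f volume a t) := by
    intro t ht
    have hsub : Ioc a t ⊆ Icc a (1/2:ℝ) := fun s hs => ⟨hs.1.le, hs.2.trans ht.2⟩
    rw [intervalIntegrable_iff_integrableOn_Ioc_of_le ht.1,
      intervalIntegrable_iff_integrableOn_Ioc_of_le ht.1]
    constructor
    · intro h
      exact integrableOn_of_aeeq measurableSet_Ioc h
        (Filter.Eventually.of_forall fun s hs => g1eq s (hsub hs))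
    · intro h
      exact integrableOn_of_aeeq measurableSet_Ioc h
        (Filter.Eventually.of_forall fun s hs => (g1eq s (hsub hs)).symm)
  have ha12 : a ≤ (1/2:ℝ) := by rw [ha]; linarith
  have HA1 : ∀ t ∈ Icc a (1/2:ℝ), IntervalIntegrable (fun s => e⁻¹ * x s) volume a t →
      x t = 1 + ∫ s in a..t, e⁻¹ * x s := by
    intro t ht hint
    have hintf : IntervalIntegrable f volume a t := (hiff1 t ht).mp hint
    have heqn : EqOn f (fun s => e⁻¹ * x s) (uIcc a t) := by
      intro s hs
      rw [uIcc_of_le ht.1] at hs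
      exact g1eq s ⟨hs.1, hs.2.trans ht.2⟩
    rw [hsol t ⟨ha0.trans ht.1, by linarith [ht.2]⟩,
      ← intervalIntegral.integral_add_adjacent_intervals I1 hintf,
      Z1 a ⟨ha0, le_refl a⟩, zero_add, intervalIntegral.integral_congr heqn]
  have HA2 : ∀ t ∈ Icc a (1/2:ℝ), ¬ IntervalIntegrable (fun s => e⁻¹ * x s) volume a t →
      x t = 1 := by
    intro t ht hnint
    have hn0 : ¬ IntervalIntegrable f volume 0 t := by
      intro h
      apply hnint
      refine (hiff1 t ht).mpr (h.mono_set ?_)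
      rw [uIcc_of_le ht.1, uIcc_of_le (ha0.trans ht.1)]
      exact Icc_subset_Icc_left ha0
    rw [hsol t ⟨ha0.trans ht.1, by linarith [ht.2]⟩, intervalIntegral.integral_undef hn0]
    norm_num
  have K1 := key_ode x e⁻¹ 1 a (1/2) ha12 HA1 HA2
  have xhalf : x (1/2:ℝ) = Real.exp 1 := by
    have h := K1 (1/2) ⟨ha12, le_refl _⟩
    rw [h, show e⁻¹ * ((1:ℝ)/2 - a) = 1 by rw [ha]; field_simp; ring, one_mul]
  have I2 : IntervalIntegrable f volume a (1/2) := by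
    rw [intervalIntegrable_iff_integrableOn_Ioc_of_le ha12]
    refine integrableOn_of_aeeq measurableSet_Ioc
      (g := fun s => e⁻¹ * (1 * Real.exp (e⁻¹ * (s - a))))
      (Continuous.integrableOn_Ioc (by fun_prop)) ?_
    refine Filter.Eventually.of_forall fun s hs => ?_
    simp only [g1eq s ⟨hs.1.le, hs.2⟩, K1 s ⟨hs.1.le, hs.2⟩]
  have I02 := I1.trans I2
  have Z2 : ∀ t ∈ Icc (1/2:ℝ) (3/2), (∫ s in (1/2:ℝ)..t, f s) = 0 := by
    intro t ht
    have hae : ∀ᵐ s : ℝ, s ∈ Set.uIoc (1/2:ℝ) t → f s = 0 := by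
      filter_upwards [ae_ne_point (3/2:ℝ)] with s hs32 hs
      rw [uIoc_of_le ht.1] at hs
      have hlt : s < 3/2 := lt_of_le_of_ne (hs.2.trans ht.2) hs32
      exact fz s (fun h => by linarith [h.2, hs.1]) (fun h => by linarith [h.1])
    rw [intervalIntegral.integral_congr_ae hae, intervalIntegral.integral_zero]
  have I3 : IntervalIntegrable f volume (1/2) (3/2) := by
    rw [intervalIntegrable_iff_integrableOn_Ioc_of_le (by norm_num : (1/2:ℝ) ≤ 3/2)]
    refine integrableOn_of_aeeq measurableSet_Ioc (g := fun _ => (0:ℝ)) integrableOn_zero ?_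
    filter_upwards [ae_ne_point (3/2:ℝ)] with s hs32 hs
    have hlt : s < 3/2 := lt_of_le_of_ne hs.2 hs32
    exact fz s (fun h => by linarith [h.2, hs.1]) (fun h => by linarith [h.1])
  have P3 : ∀ t ∈ Icc (1/2:ℝ) (3/2), x t = Real.exp 1 := by
    intro t ht
    have hint : IntervalIntegrable f volume (1/2) t := I3.mono_set (by
      rw [uIcc_of_le ht.1, uIcc_of_le (by norm_num : (1/2:ℝ) ≤ 3/2)]
      exact Icc_subset_Icc_right ht.2)
    rw [hsol t ⟨by linarith [ht.1], by linarith [ht.2]⟩,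
      ← intervalIntegral.integral_add_adjacent_intervals I02 hint, Z2 t ht, add_zero,
      ← hsol (1/2) ⟨by norm_num, by norm_num⟩, xhalf]
  have I03 := I02.trans I3
  -- second bump
  have g2eq : ∀ s ∈ Icc (3/2:ℝ) (3/2+e), f s = (Real.exp 1 * e⁻¹) * x s := by
    intro s hs
    have h1 := hs.1; have h2 := hs.2
    have hx1 : x (s-1) = Real.exp 1 := P3 (s-1) ⟨by linarith, by linarith⟩
    simp only [hf]
    rw [hx1, hu2 s hs]
    ring
  have hiff2 : ∀ t ∈ Icc (3/2:ℝ) (3/2+e),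
      (IntervalIntegrable (fun s => (Real.exp 1 * e⁻¹) * x s) volume (3/2) t ↔
        IntervalIntegrable f volume (3/2) t) := by
    intro t ht
    have hsub : Ioc (3/2:ℝ) t ⊆ Icc (3/2:ℝ) (3/2+e) := fun s hs => ⟨hs.1.le, hs.2.trans ht.2⟩
    rw [intervalIntegrable_iff_integrableOn_Ioc_of_le ht.1,
      intervalIntegrable_iff_integrableOn_Ioc_of_le ht.1]
    constructor
    · intro h
      exact integrableOn_of_aeeq measurableSet_Ioc h
        (Filter.Eventually.of_forall fun s hs => g2eq s (hsub hs))
    · intro h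
      exact integrableOn_of_aeeq measurableSet_Ioc h
        (Filter.Eventually.of_forall fun s hs => (g2eq s (hsub hs)).symm)
  have he32 : (3/2:ℝ) ≤ 3/2 + e := by linarith
  have HB1 : ∀ t ∈ Icc (3/2:ℝ) (3/2+e),
      IntervalIntegrable (fun s => (Real.exp 1 * e⁻¹) * x s) volume (3/2) t →
      x t = Real.exp 1 + ∫ s in (3/2:ℝ)..t, (Real.exp 1 * e⁻¹) * x s := by
    intro t ht hint
    have hintf : IntervalIntegrable f volume (3/2) t := (hiff2 t ht).mp hint
    have heqn : EqOn f (fun s => (Real.exp 1 * e⁻¹) * x s) (uIcc (3/2:ℝ) t) := by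
      intro s hs
      rw [uIcc_of_le ht.1] at hs
      exact g2eq s ⟨hs.1, hs.2.trans ht.2⟩
    rw [hsol t ⟨by linarith [ht.1], by linarith [ht.2]⟩,
      ← intervalIntegral.integral_add_adjacent_intervals I03 hintf,
      intervalIntegral.integral_congr heqn, ← add_assoc,
      ← hsol (3/2) ⟨by norm_num, by norm_num⟩, P3 (3/2) ⟨by norm_num, le_refl _⟩]
  have HB2 : ∀ t ∈ Icc (3/2:ℝ) (3/2+e),
      ¬ IntervalIntegrable (fun s => (Real.exp 1 * e⁻¹) * x s) volume (3/2) t → x t = 1 := by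
    intro t ht hnint
    have hn0 : ¬ IntervalIntegrable f volume 0 t := by
      intro h
      apply hnint
      refine (hiff2 t ht).mpr (h.mono_set ?_)
      rw [uIcc_of_le ht.1, uIcc_of_le (by linarith [ht.1] : (0:ℝ) ≤ t)]
      exact Icc_subset_Icc_left (by norm_num)
    rw [hsol t ⟨by linarith [ht.1], by linarith [ht.2]⟩, intervalIntegral.integral_undef hn0]
    norm_num
  have K2 := key_ode x (Real.exp 1 * e⁻¹) (Real.exp 1) (3/2) (3/2+e) he32 HB1 HB2
  have xend : x (3/2+e) = Real.exp (1 + Real.exp 1) := by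
    have h := K2 (3/2+e) ⟨he32, le_refl _⟩
    rw [h, show Real.exp 1 * e⁻¹ * (3/2 + e - 3/2) = Real.exp 1 by field_simp; ring,
      ← Real.exp_add]
  have I4 : IntervalIntegrable f volume (3/2) (3/2+e) := by
    rw [intervalIntegrable_iff_integrableOn_Ioc_of_le he32]
    refine integrableOn_of_aeeq measurableSet_Ioc
      (g := fun s => (Real.exp 1 * e⁻¹) * (Real.exp 1 * Real.exp (Real.exp 1 * e⁻¹ * (s - 3/2))))
      (Continuous.integrableOn_Ioc (by fun_prop)) ?_
    refine Filter.Eventually.of_forall fun s hs => ?_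
    simp only [g2eq s ⟨hs.1.le, hs.2⟩, K2 s ⟨hs.1.le, hs.2⟩]
  have I04 := I03.trans I4
  have P5 : ∀ t ∈ Icc (3/2+e:ℝ) 2, x t = Real.exp (1 + Real.exp 1) := by
    intro t ht
    have Z3 : (∫ s in (3/2+e:ℝ)..t, f s) = 0 := by
      have hae : ∀ᵐ s : ℝ, s ∈ Set.uIoc (3/2+e:ℝ) t → f s = 0 :=
        Filter.Eventually.of_forall fun s hs => by
          rw [uIoc_of_le ht.1] at hs
          exact fz s (fun h => by linarith [h.2, hs.1]) (fun h => by linarith [h.2, hs.1])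
      rw [intervalIntegral.integral_congr_ae hae, intervalIntegral.integral_zero]
    have hint : IntervalIntegrable f volume (3/2+e) t := by
      rw [intervalIntegrable_iff_integrableOn_Ioc_of_le ht.1]
      refine integrableOn_of_aeeq measurableSet_Ioc (g := fun _ => (0:ℝ)) integrableOn_zero ?_
      exact Filter.Eventually.of_forall fun s hs =>
        fz s (fun h => by linarith [h.2, hs.1]) (fun h => by linarith [h.2, hs.1])
    rw [hsol t ⟨by linarith [ht.1], ht.2⟩,
      ← intervalIntegral.integral_add_adjacent_intervals I04 hint, Z3, add_zero,
      ← hsol (3/2+e) ⟨by linarith, by linarith [ht.1, ht.2]⟩, xend]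
  exact ⟨P1, P3, P5⟩


/-- Let `εᵢ ∈ (0,1/4)` with `εᵢ → 0`, let
`ũᵢ = εᵢ⁻¹` on `[1/2−εᵢ, 1/2] ∪ [3/2, 3/2+εᵢ]` and `0` elsewhere, and let `x̃ᵢ` be the
unique absolutely continuous solution on `[0,2]` of `ẋ̃ᵢ(t) = x̃ᵢ(t)x̃ᵢ(t−1)ũᵢ(t)` with
`x̃ᵢ ≡ 1` on `[−1,0]` (encoded by the integral equation). Then for every
`t ∈ [0,2] \ {1/2, 3/2}`, `x̃ᵢ(t) → x̃(t)`, where `x̃ = 1` on `[0,1/2)`, `x̃ = e` on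
`[1/2,3/2)` and `x̃ = e^{1+e}` on `(3/2,2]`. -/
theorem stmt_17 (ε : ℕ → ℝ) (hε : ∀ i, ε i ∈ Ioo (0:ℝ) (1/4))
    (hε0 : Tendsto ε atTop (nhds 0))
    (u : ℕ → ℝ → ℝ)
    (hu : ∀ i t, u i t =
      if t ∈ Icc (1/2 - ε i : ℝ) (1/2) ∪ Icc (3/2 : ℝ) (3/2 + ε i) then (ε i)⁻¹ else 0)
    (x : ℕ → ℝ → ℝ)
    (hist : ∀ i, ∀ t ∈ Icc (-1 : ℝ) 0, x i t = 1)
    (hsol : ∀ i, ∀ t ∈ Icc (0:ℝ) 2,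
      x i t = 1 + ∫ s in (0:ℝ)..t, x i s * x i (s - 1) * u i s) :
    ∀ t ∈ Icc (0:ℝ) 2 \ {1/2, 3/2},
      Tendsto (fun i => x i t) atTop
        (nhds (if t < 1/2 then 1 else if t < 3/2 then Real.exp 1
          else Real.exp (1 + Real.exp 1))) := by
  intro t ht
  obtain ⟨⟨ht0, ht2⟩, htne⟩ := ht
  simp only [mem_insert_iff, mem_singleton_iff, not_or] at htne
  obtain ⟨h12, h32⟩ := htne
  have prof := fun i =>
    solution_profile (ε i) (hε i).1 (hε i).2 (u i) (hu i) (x i) (hist i) (hsol i)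
  rcases lt_or_gt_of_ne h12 with hlt | hgt
  · rw [if_pos hlt]
    have hev : ∀ᶠ i in atTop, ε i < 1/2 - t := hε0.eventually_lt_const (by linarith)
    refine Tendsto.congr' ?_ tendsto_const_nhds
    filter_upwards [hev] with i hi
    exact ((prof i).1 t ⟨ht0, by linarith⟩).symm
  · rcases lt_or_gt_of_ne h32 with hlt2 | hgt2
    · rw [if_neg (not_lt.mpr hgt.le), if_pos hlt2]
      exact Tendsto.congr (fun i => ((prof i).2.1 t ⟨hgt.le, hlt2.le⟩).symm)
        tendsto_const_nhds
    · rw [if_neg (not_lt.mpr hgt.le), if_neg (not_lt.mpr hgt2.le)]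
      have hev : ∀ᶠ i in atTop, ε i < t - 3/2 := hε0.eventually_lt_const (by linarith)
      refine Tendsto.congr' ?_ tendsto_const_nhds
      filter_upwards [hev] with i hi
      exact ((prof i).2.2 t ⟨by linarith, ht2⟩).symm
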